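/- Trees of finite height, considered as structures in the language with a single binary relation Pred (immediate predecessor), are pseudofinite: every first-order sentence true in some finite-height tree is true in some finite tree. -/

import Mathlib

open FirstOrder Language

/-- The language with a single binary relation `Pred`. -/
def LPred : FirstOrder.Language where
  Functions := fun _ => Empty
  Relations := fun n => match n with
    | 2 => Unit
    | _ => Empty

/-- The interpretation of `Pred`: `x` is the immediate predecessor of `y`. -/
def predOn {M : Type*} (s : LPred.Structure M) (x y : M) : Prop :=
  s.RelMap (show LPred.Relations 2 from ()) ![x, y]

/-- `M` is a tree in the language `{Pred}`: there is a unique root (an element with no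
predecessor), every element with a predecessor has a unique one, and every element is reachable
from the root by finitely many `Pred`-steps. -/
def IsPredTree (M : Type*) (s : LPred.Structure M) : Prop :=
  (∃! r : M, ¬∃ y, predOn s y r) ∧
  (∀ x : M, (∃ y, predOn s y x) → ∃! y, predOn s y x) ∧
  (∀ r x : M, (¬∃ y, predOn s y r) → Relation.ReflTransGen (predOn s) r x)

/-- `M` has height at most `h`: there is no `Pred`-chain with `h + 1` edges. -/
def PredHeightLe (M : Type*) (s : LPred.Structure M) (h : ℕ) : Prop :=
  ∀ g : Fin (h + 2) → M, ¬∀ i : Fin (h + 1), predOn s (g i.castSucc) (g i.succ)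


open Set
open scoped Classical

variable {α : Type*}

/-- truncated count -/
noncomputable def tcnt (thr : ℕ) (s : Set α) : ℕ := if s.Finite then min thr s.ncard else thr

lemma tcnt_le (thr : ℕ) (s : Set α) : tcnt thr s ≤ thr := by
  by_cases h : s.Finite <;> simp [tcnt, h]

lemma tcnt_congr_of_bij {β : Type*} (thr : ℕ) {s : Set α} {t : Set β} (f : α → β)
    (hf : Set.InjOn f s) (him : f '' s = t) : tcnt thr s = tcnt thr t := by
  subst him
  have h1 : (f '' s).ncard = s.ncard := Set.ncard_image_of_injOn hf
  have h2 : (f '' s).Finite ↔ s.Finite :=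
    ⟨fun h => h.of_finite_image hf, fun h => h.image f⟩
  by_cases h : s.Finite <;> simp [tcnt, h, h1, h2]

lemma le_tcnt_of_subset {thr : ℕ} {s' s : Set α} (hsub : s' ⊆ s) (hfin : s'.Finite)
    (hle : s'.ncard ≤ thr) : s'.ncard ≤ tcnt thr s := by
  by_cases h : s.Finite
  · simp only [tcnt, h, if_true]
    exact le_min hle (Set.ncard_le_ncard hsub h)
  · simp [tcnt, h, hle]

lemma exists_not_mem_of_lt_tcnt {thr : ℕ} {s' s : Set α} (hsub : s' ⊆ s) (hfin : s'.Finite)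
    (hlt : s'.ncard < tcnt thr s) : ∃ x ∈ s, x ∉ s' := by
  by_contra hcon
  push_neg at hcon
  have hss : s = s' := le_antisymm hcon hsub
  subst hss
  by_cases h : s.Finite
  · simp only [tcnt, h, if_true] at hlt
    omega
  · exact h hfin

/-- exists a sub-selection of truncated size -/
lemma exists_tcnt_subset (thr : ℕ) (s : Set α) :
    ∃ s' ⊆ s, s'.Finite ∧ s'.ncard = tcnt thr s := by
  by_cases h : s.Finite
  · by_cases h2 : s.ncard ≤ thr
    · exact ⟨s, subset_rfl, h, by simp [tcnt, h]; omega⟩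
    · obtain ⟨t, hts, htc⟩ := Set.exists_subset_card_eq (show thr ≤ s.ncard by omega)
      exact ⟨t, hts, h.subset hts, by simp [tcnt, h]; omega⟩
  · obtain ⟨t, hts, htfin, htc⟩ := Set.Infinite.exists_subset_ncard_eq (h : s.Infinite) thr
    exact ⟨t, hts, htfin, by simp [tcnt, h, htc]⟩

lemma min_sum_min {ι : Type*} (thr : ℕ) (I : Finset ι) (a : ι → ℕ) :
    min thr (∑ i ∈ I, min thr (a i)) = min thr (∑ i ∈ I, a i) := by
  by_cases hh : ∀ i ∈ I, a i ≤ thr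
  · congr 1
    exact Finset.sum_congr rfl (fun i hi => min_eq_right (hh i hi))
  · push_neg at hh
    obtain ⟨i, hi, hgt⟩ := hh
    have h1 : thr ≤ ∑ i ∈ I, min thr (a i) :=
      le_trans (by omega : thr ≤ min thr (a i))
        (Finset.single_le_sum (f := fun i => min thr (a i)) (fun _ _ => Nat.zero_le _) hi)
    have h2 : thr ≤ ∑ i ∈ I, a i :=
      le_trans (by omega) (Finset.single_le_sum (f := a) (fun _ _ => Nat.zero_le _) hi)
    omega

lemma ncard_biUnion {ι : Type*} (I : Finset ι) (s : ι → Set α)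
    (hfin : ∀ i ∈ I, (s i).Finite)
    (hdisj : ∀ i ∈ I, ∀ j ∈ I, i ≠ j → Disjoint (s i) (s j)) :
    (⋃ i ∈ I, s i).ncard = ∑ i ∈ I, (s i).ncard := by
  classical
  induction I using Finset.induction with
  | empty => simp
  | @insert a I' hnot ih =>
    rw [Finset.sum_insert hnot]
    have hU : (⋃ i ∈ insert a I', s i) = s a ∪ ⋃ i ∈ I', s i := by
      simp [Set.biUnion_insert]
    rw [hU]
    have hdisj2 : Disjoint (s a) (⋃ i ∈ I', s i) := by
      refine Set.disjoint_iUnion_right.mpr (fun i => Set.disjoint_iUnion_right.mpr (fun hi => ?_))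
      exact hdisj a (Finset.mem_insert_self a I') i (Finset.mem_insert_of_mem hi)
        (by rintro rfl; exact hnot hi)
    rw [Set.ncard_union_eq hdisj2 (hfin a (Finset.mem_insert_self a I'))
      (Set.Finite.biUnion I'.finite_toSet (fun i hi => hfin i (Finset.mem_insert_of_mem hi)))]
    rw [ih (fun i hi => hfin i (Finset.mem_insert_of_mem hi))
      (fun i hi j hj hij => hdisj i (Finset.mem_insert_of_mem hi) j (Finset.mem_insert_of_mem hj) hij)]

/-- tcnt of a disjoint finite union -/
lemma tcnt_biUnion {ι : Type*} (thr : ℕ) (I : Finset ι) (s : ι → Set α)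
    (hdisj : ∀ i ∈ I, ∀ j ∈ I, i ≠ j → Disjoint (s i) (s j)) :
    tcnt thr (⋃ i ∈ I, s i) = min thr (∑ i ∈ I, tcnt thr (s i)) := by
  by_cases hfin : ∀ i ∈ I, (s i).Finite
  · have hU : (⋃ i ∈ I, s i).Finite := Set.Finite.biUnion I.finite_toSet hfin
    have hcard := ncard_biUnion I s hfin hdisj
    have hstep : ∑ i ∈ I, tcnt thr (s i) = ∑ i ∈ I, min thr (s i).ncard :=
      Finset.sum_congr rfl (fun i hi => by simp [tcnt, hfin i hi])
    rw [show tcnt thr (⋃ i ∈ I, s i) = min thr (∑ i ∈ I, (s i).ncard) by simp [tcnt, hU, hcard],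
      hstep]
    exact (min_sum_min thr I (fun i => (s i).ncard)).symm
  · push_neg at hfin
    obtain ⟨i, hi, hinf⟩ := hfin
    have hU : ¬ (⋃ i ∈ I, s i).Finite := by
      intro h
      exact hinf (h.subset (Set.subset_biUnion_of_mem hi))
    have hti : tcnt thr (s i) = thr := by simp [tcnt, hinf]
    have h1 : thr ≤ ∑ j ∈ I, tcnt thr (s j) := by
      calc thr = tcnt thr (s i) := hti.symm
      _ ≤ _ := Finset.single_le_sum (f := fun j => tcnt thr (s j)) (fun _ _ => Nat.zero_le _) hi
    rw [show tcnt thr (⋃ i ∈ I, s i) = thr by simp [tcnt, hU] ]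
    omega

/-! ### Type spaces -/

/-- Truncated type space of depth `j`. -/
def TS (thr : ℕ) : ℕ → Type
  | 0 => Unit
  | j+1 => TS thr j × (TS thr j → Fin (thr+1))

noncomputable def TSfin (thr : ℕ) : ∀ j, Fintype (TS thr j)
  | 0 => by unfold TS; infer_instance
  | j+1 => by
    unfold TS
    have := TSfin thr j
    have := Classical.decEq (TS thr j)
    infer_instance

noncomputable instance (thr j : ℕ) : Fintype (TS thr j) := TSfin thr j

/-- A leveled tree of height at most `h`. -/
structure LTree (α : Type) (h : ℕ) where
  root : α
  par : α → α
  lev : α → ℕ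
  par_root : par root = root
  lev_eq_zero : ∀ x, lev x = 0 ↔ x = root
  lev_par : ∀ x, x ≠ root → lev x = lev (par x) + 1
  lev_le : ∀ x, lev x ≤ h

namespace LTree

variable {h : ℕ} {α β : Type}

/-- children of a node -/
def child (T : LTree α h) (x : α) : Set α := {c | T.par c = x ∧ c ≠ T.root}

lemma lev_child {T : LTree α h} {x c : α} (hc : c ∈ T.child x) : T.lev c = T.lev x + 1 := by
  rw [T.lev_par c hc.2, hc.1]

/-- the truncated type of depth `j` of a node -/
noncomputable def typ (thr : ℕ) (T : LTree α h) : ∀ j, α → TS thr j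
  | 0, _ => ()
  | j+1, x =>
    (typ thr T j x,
      fun t => ⟨tcnt thr {c | c ∈ T.child x ∧ typ thr T j c = t},
        Nat.lt_succ_of_le (tcnt_le _ _)⟩)

lemma typ_fst (thr : ℕ) (T : LTree α h) (j : ℕ) (x : α) :
    (typ thr T (j+1) x).1 = typ thr T j x := rfl

lemma typ_snd (thr : ℕ) (T : LTree α h) (j : ℕ) (x : α) (t : TS thr j) :
    ((typ thr T (j+1) x).2 t : ℕ) = tcnt thr {c | c ∈ T.child x ∧ typ thr T j c = t} := rfl

/-- type agreement is antitone in depth (between possibly different trees) -/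
lemma typ_le {thr : ℕ} {T : LTree α h} {U : LTree β h} {j j' : ℕ} (hj : j ≤ j') :
    ∀ (x : α) (y : β), typ thr T j' x = typ thr U j' y → typ thr T j x = typ thr U j y := by
  induction hj with
  | refl => exact fun _ _ hxy => hxy
  | step _ ih => exact fun x y hxy => ih x y (congrArg Prod.fst hxy)

/-! ### Good families of partial isomorphisms -/

structure Good (thr : ℕ) (T : LTree α h) (U : LTree β h) (j : ℕ) (P : Set (α × β)) : Prop where
  root_mem : (T.root, U.root) ∈ P
  fin : P.Finite
  card : P.ncard + j ≤ thr
  levEq : ∀ p ∈ P, U.lev p.2 = T.lev p.1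
  typEq : ∀ p ∈ P, typ thr T j p.1 = typ thr U j p.2
  par_mem : ∀ p ∈ P, p.1 ≠ T.root → (T.par p.1, U.par p.2) ∈ P
  inj1 : ∀ p ∈ P, ∀ q ∈ P, p.1 = q.1 → p.2 = q.2
  inj2 : ∀ p ∈ P, ∀ q ∈ P, p.2 = q.2 → p.1 = q.1

namespace Good

variable {thr j : ℕ} {T : LTree α h} {U : LTree β h} {P : Set (α × β)}

lemma root_iff (G : Good thr T U j P) {p : α × β} (hp : p ∈ P) :
    p.1 = T.root ↔ p.2 = U.root := by
  rw [← T.lev_eq_zero, ← U.lev_eq_zero, G.levEq p hp]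

lemma mono (G : Good thr T U j P) {j' : ℕ} (hj : j' ≤ j) : Good thr T U j' P where
  root_mem := G.root_mem
  fin := G.fin
  card := by have := G.card; omega
  levEq := G.levEq
  typEq := fun p hp => typ_le hj p.1 p.2 (G.typEq p hp)
  par_mem := G.par_mem
  inj1 := G.inj1
  inj2 := G.inj2

lemma symm (G : Good thr T U j P) : Good thr U T j (Prod.swap '' P) where
  root_mem := ⟨(T.root, U.root), G.root_mem, rfl⟩
  fin := G.fin.image _
  card := by rw [Set.ncard_image_of_injective _ Prod.swap_injective]; exact G.card
  levEq := by rintro p ⟨q, hq, rfl⟩; exact (G.levEq q hq).symm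
  typEq := by rintro p ⟨q, hq, rfl⟩; exact (G.typEq q hq).symm
  par_mem := by
    rintro p ⟨q, hq, rfl⟩ hr
    exact ⟨(T.par q.1, U.par q.2), G.par_mem q hq (fun hq1 => hr ((G.root_iff hq).mp hq1)), rfl⟩
  inj1 := by
    rintro p ⟨q, hq, rfl⟩ p' ⟨q', hq', rfl⟩ hfst
    exact G.inj2 q hq q' hq' hfst
  inj2 := by
    rintro p ⟨q, hq, rfl⟩ p' ⟨q', hq', rfl⟩ hsnd
    exact G.inj1 q hq q' hq' hsnd

/-- The key one-step extension lemma. -/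
lemma step (G : Good thr T U (j+1) P) {u : α × β} (hu : u ∈ P) {c : α}
    (hc : c ∈ T.child u.1) (hcP : ∀ b, (c, b) ∉ P) :
    ∃ d, d ∈ U.child u.2 ∧ typ thr T j c = typ thr U j d ∧
      Good thr T U j (insert (c, d) P) := by
  classical
  set t := typ thr T j c with ht
  set CM : Set α := {x | x ∈ T.child u.1 ∧ typ thr T j x = t} with hCM
  set CU : Set β := {y | y ∈ U.child u.2 ∧ typ thr U j y = t} with hCU
  have hcnt : tcnt thr CM = tcnt thr CU := by
    have := congrArg (fun z : TS thr (j+1) => (z.2 t : ℕ)) (G.typEq u hu)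
    simpa [typ_snd] using this
  set MU : Set α := {a | a ∈ CM ∧ ∃ b, (a, b) ∈ P} with hMU
  set UU : Set β := {b | b ∈ CU ∧ ∃ a, (a, b) ∈ P} with hUU
  have hMUfin : MU.Finite := by
    apply Set.Finite.subset (G.fin.image Prod.fst)
    rintro a ⟨_, b, hab⟩
    exact ⟨(a, b), hab, rfl⟩
  have hUUfin : UU.Finite := by
    apply Set.Finite.subset (G.fin.image Prod.snd)
    rintro b ⟨_, a, hab⟩
    exact ⟨(a, b), hab, rfl⟩
  -- each used b comes from a used a
  haveI : Nonempty α := ⟨T.root⟩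
  set f : β → α := fun b => Classical.epsilon (fun a => (a, b) ∈ P) with hf
  have hfP : ∀ b ∈ UU, (f b, b) ∈ P := by
    rintro b ⟨-, a, hab⟩
    exact Classical.epsilon_spec (⟨a, hab⟩ : ∃ a, (a, b) ∈ P)
  have hfMU : ∀ b ∈ UU, f b ∈ MU := by
    intro b hb
    obtain ⟨⟨hbchild, hbtyp⟩, hex⟩ := hb
    have hpair := hfP b ⟨⟨hbchild, hbtyp⟩, hex⟩
    have hfroot : f b ≠ T.root := by
      intro hr
      exact hbchild.2 ((G.root_iff hpair).mp hr)
    have hparm := G.par_mem (f b, b) hpair hfroot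
    have : U.par b = u.2 := hbchild.1
    have hfst : T.par (f b) = u.1 := by
      have := G.inj2 _ hparm u hu (by simpa using this)
      simpa using this
    refine ⟨⟨⟨hfst, hfroot⟩, ?_⟩, b, hpair⟩
    rw [show t = typ thr U j b from hbtyp.symm]
    exact typ_le (Nat.le_succ j) _ _ (G.typEq _ hpair)
  have hUU_MU : UU.ncard ≤ MU.ncard := by
    apply Set.ncard_le_ncard_of_injOn f hfMU _ hMUfin
    intro b hb b' hb' hbb
    exact G.inj1 (f b, b) (hfP b hb) (f b', b') (hfP b' hb') hbb
  have hcMU : c ∉ MU := fun hcm => (hcP hcm.2.choose) hcm.2.choose_spec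
  have hins : insert c MU ⊆ CM := by
    intro x hx
    rcases hx with rfl | hx
    · exact ⟨hc, rfl⟩
    · exact hx.1
  have hMU_P : MU.ncard ≤ P.ncard := by
    haveI : Nonempty β := ⟨U.root⟩
    exact Set.ncard_le_ncard_of_injOn (fun a => (a, Classical.epsilon (fun b => (a, b) ∈ P)))
      (fun a ha => Classical.epsilon_spec (⟨ha.2.choose, ha.2.choose_spec⟩ : ∃ b, (a, b) ∈ P))
      (fun a _ a' _ haa => congrArg Prod.fst haa) G.fin
  have hcard1 : (insert c MU).ncard = MU.ncard + 1 := Set.ncard_insert_of_notMem hcMU hMUfin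
  have hle : (insert c MU).ncard ≤ tcnt thr CM := by
    apply le_tcnt_of_subset hins (hMUfin.insert c)
    have := G.card
    omega
  have hfresh : UU.ncard < tcnt thr CU := by
    rw [← hcnt]
    omega
  obtain ⟨d, hdCU, hdUU⟩ := exists_not_mem_of_lt_tcnt (fun y hy => hy.1) hUUfin hfresh
  have hdP : ∀ a, (a, d) ∉ P := fun a ha => hdUU ⟨hdCU, a, ha⟩
  refine ⟨d, hdCU.1, hdCU.2.symm, ?_⟩
  have hlevd : U.lev d = T.lev c := by
    rw [lev_child hdCU.1, lev_child hc, G.levEq u hu]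
  constructor
  · exact Set.mem_insert_of_mem _ G.root_mem
  · exact G.fin.insert _
  · have h1 := Set.ncard_insert_le (c, d) P
    have := G.card
    have : P.ncard ≠ 0 → (insert (c,d) P).ncard ≤ P.ncard + 1 := fun _ => h1
    omega
  · rintro p (rfl | hp)
    · exact hlevd
    · exact G.levEq p hp
  · rintro p (rfl | hp)
    · exact hdCU.2.symm ▸ rfl
    · exact typ_le (Nat.le_succ j) _ _ (G.typEq p hp)
  · rintro p (rfl | hp) hproot
    · have : (T.par c, U.par d) = u := Prod.ext hc.1 hdCU.1.1
      simp only [this]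
      exact Set.mem_insert_of_mem _ hu
    · exact Set.mem_insert_of_mem _ (G.par_mem p hp hproot)
  · rintro p (rfl | hp) q (rfl | hq) heq
    · rfl
    · exact absurd hq (by rw [show q = (c, q.2) from Prod.ext heq.symm rfl]; exact hcP q.2)
    · exact absurd hp (by rw [show p = (c, p.2) from Prod.ext heq rfl]; exact hcP p.2)
    · exact G.inj1 p hp q hq heq
  · rintro p (rfl | hp) q (rfl | hq) heq
    · rfl
    · exact absurd hq (by rw [show q = (q.1, d) from Prod.ext rfl heq.symm]; exact hdP q.1)
    · exact absurd hp (by rw [show p = (p.1, d) from Prod.ext rfl heq]; exact hdP p.1)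
    · exact G.inj2 p hp q hq heq

lemma forth_aux :
    ∀ (k : ℕ) (a : α), T.lev a ≤ k → ∀ (j : ℕ) (P : Set (α × β)), Good thr T U (j + k) P →
      ∃ P', P ⊆ P' ∧ Good thr T U j P' ∧ ∃ b, (a, b) ∈ P' := by
  intro k
  induction k with
  | zero =>
    intro a ha j P G
    have : a = T.root := (T.lev_eq_zero a).mp (by omega)
    subst this
    exact ⟨P, subset_rfl, by simpa using G, U.root, G.root_mem⟩
  | succ k ih =>
    intro a ha j P G
    by_cases hex : ∃ b, (a, b) ∈ P
    · exact ⟨P, subset_rfl, G.mono (by omega), hex⟩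
    by_cases hroot : a = T.root
    · exact absurd ⟨U.root, hroot ▸ G.root_mem⟩ hex
    by_cases hlev : T.lev a ≤ k
    · exact ih a hlev j P (G.mono (by omega))
    · have hple : T.lev (T.par a) ≤ k := by
        have := T.lev_par a hroot
        omega
      have G' : Good thr T U ((j+1) + k) P := by
        have : (j+1) + k = j + (k+1) := by omega
        rw [this]
        exact G
      obtain ⟨P₁, hPP₁, G₁, b₁, hb₁⟩ := ih (T.par a) hple (j+1) P G'
      by_cases hex1 : ∃ b, (a, b) ∈ P₁
      · exact ⟨P₁, hPP₁, G₁.mono (by omega), hex1⟩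
      · obtain ⟨d, _, _, G₂⟩ := G₁.step hb₁ (c := a) ⟨rfl, hroot⟩ (fun b hb => hex1 ⟨b, hb⟩)
        exact ⟨insert (a, d) P₁, fun p hp => Set.mem_insert_of_mem _ (hPP₁ hp),
          G₂, d, Set.mem_insert _ _⟩

lemma forth (G : Good thr T U (j + h) P) (a : α) :
    ∃ P', P ⊆ P' ∧ Good thr T U j P' ∧ ∃ b, (a, b) ∈ P' :=
  forth_aux h a (T.lev_le a) j P G

lemma back (G : Good thr T U (j + h) P) (b : β) :
    ∃ P', P ⊆ P' ∧ Good thr T U j P' ∧ ∃ a, (a, b) ∈ P' := by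
  obtain ⟨Q, hQ, GQ, a, haQ⟩ := G.symm.forth b
  refine ⟨Prod.swap '' Q, ?_, GQ.symm, a, (b, a), haQ, rfl⟩
  intro p hp
  exact ⟨p.swap, hQ ⟨p, hp, rfl⟩, p.swap_swap⟩

end Good

end LTree

/-! ### Transfer -/

/-- quantifier depth -/
def qd : ∀ {m : ℕ}, LPred.BoundedFormula Empty m → ℕ
  | _, .falsum => 0
  | _, .equal _ _ => 0
  | _, .rel _ _ => 0
  | _, .imp f g => max (qd f) (qd g)
  | _, .all f => qd f + 1

lemma term_eq_var : ∀ {m : ℕ} (t : LPred.Term (Empty ⊕ Fin m)), ∃ i, t = Term.var (Sum.inr i)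
  | _, .var (Sum.inl e) => e.elim
  | _, .var (Sum.inr i) => ⟨i, rfl⟩
  | _, .func f _ => (f : Empty).elim

section Transfer

variable {h thr : ℕ} {α β : Type} (T : LTree α h) (U : LTree β h)
  (sM : LPred.Structure α) (sU : LPred.Structure β)

theorem transfer
    (hbrT : ∀ x y : α, predOn sM x y ↔ (y ≠ T.root ∧ T.par y = x))
    (hbrU : ∀ x y : β, predOn sU x y ↔ (y ≠ U.root ∧ U.par y = x)) :
    ∀ {m : ℕ} (φ : LPred.BoundedFormula Empty m) (j : ℕ), qd φ * (h+1) ≤ j →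
      ∀ (P : Set (α × β)), LTree.Good thr T U j P →
      ∀ (v : Fin m → α) (w : Fin m → β), (∀ i, (v i, w i) ∈ P) →
      (@BoundedFormula.Realize LPred α sM Empty m φ (fun e => e.elim) v ↔
        @BoundedFormula.Realize LPred β sU Empty m φ (fun e => e.elim) w) := by
  letI := sM
  letI := sU
  intro m φ
  induction φ with
  | falsum => exact fun j hj P G v w hvw => Iff.rfl
  | equal t₁ t₂ =>
    intro j hj P G v w hvw
    obtain ⟨i₁, rfl⟩ := term_eq_var t₁
    obtain ⟨i₂, rfl⟩ := term_eq_var t₂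
    have : (@BoundedFormula.Realize LPred α sM Empty _ (.equal (.var (Sum.inr i₁)) (.var (Sum.inr i₂))) (fun e => e.elim) v) ↔ v i₁ = v i₂ := Iff.rfl
    rw [this]
    have : (@BoundedFormula.Realize LPred β sU Empty _ (.equal (.var (Sum.inr i₁)) (.var (Sum.inr i₂))) (fun e => e.elim) w) ↔ w i₁ = w i₂ := Iff.rfl
    rw [this]
    constructor
    · intro hv
      exact G.inj1 _ (hvw i₁) _ (hvw i₂) hv
    · intro hw
      exact G.inj2 _ (hvw i₁) _ (hvw i₂) hw
  | rel R ts =>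
    intro j hj P G v w hvw
    rename_i l
    match l, R with
    | 2, R =>
      obtain ⟨i₁, h₁⟩ := term_eq_var (ts 0)
      obtain ⟨i₂, h₂⟩ := term_eq_var (ts 1)
      have hts : ts = ![Term.var (Sum.inr i₁), Term.var (Sum.inr i₂)] := by
        funext i
        fin_cases i <;> simpa using (by assumption)
      subst hts
      have e1 : (@BoundedFormula.Realize LPred α sM Empty _ (.rel R ![.var (Sum.inr i₁), .var (Sum.inr i₂)]) (fun e => e.elim) v) ↔ predOn sM (v i₁) (v i₂) := by
        have harg : (fun i => Term.realize (L := LPred) (M := α) (Sum.elim (fun e : Empty => e.elim) v)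
            ((![Term.var (Sum.inr i₁), Term.var (Sum.inr i₂)]) i)) = ![v i₁, v i₂] := by
          funext i
          fin_cases i <;> rfl
        have e0 : (@BoundedFormula.Realize LPred α sM Empty _ (.rel R ![.var (Sum.inr i₁), .var (Sum.inr i₂)]) (fun e => e.elim) v) ↔
            Structure.RelMap (M := α) R (fun i => Term.realize (L := LPred) (M := α) (Sum.elim (fun e : Empty => e.elim) v)
            ((![Term.var (Sum.inr i₁), Term.var (Sum.inr i₂)]) i)) := Iff.rfl
        rw [e0, harg]
        exact Iff.rfl
      have e2 : (@BoundedFormula.Realize LPred β sU Empty _ (.rel R ![.var (Sum.inr i₁), .var (Sum.inr i₂)]) (fun e => e.elim) w) ↔ predOn sU (w i₁) (w i₂) := by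
        have harg : (fun i => Term.realize (L := LPred) (M := β) (Sum.elim (fun e : Empty => e.elim) w)
            ((![Term.var (Sum.inr i₁), Term.var (Sum.inr i₂)]) i)) = ![w i₁, w i₂] := by
          funext i
          fin_cases i <;> rfl
        have e0 : (@BoundedFormula.Realize LPred β sU Empty _ (.rel R ![.var (Sum.inr i₁), .var (Sum.inr i₂)]) (fun e => e.elim) w) ↔
            Structure.RelMap (M := β) R (fun i => Term.realize (L := LPred) (M := β) (Sum.elim (fun e : Empty => e.elim) w)
            ((![Term.var (Sum.inr i₁), Term.var (Sum.inr i₂)]) i)) := Iff.rfl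
        rw [e0, harg]
        exact Iff.rfl
      rw [e1, e2, hbrT, hbrU]
      have hroot : v i₂ = T.root ↔ w i₂ = U.root := G.root_iff (hvw i₂)
      constructor
      · rintro ⟨hne, hpar⟩
        refine ⟨fun hr => hne (hroot.mpr hr), ?_⟩
        have hpm := G.par_mem _ (hvw i₂) hne
        exact G.inj1 _ hpm _ (hvw i₁) hpar
      · rintro ⟨hne, hpar⟩
        refine ⟨fun hr => hne (hroot.mp hr), ?_⟩
        have hpm := G.par_mem _ (hvw i₂) (fun hr => hne (hroot.mp hr))
        exact G.inj2 _ hpm _ (hvw i₁) hpar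
  | imp f g ihf ihg =>
    intro j hj P G v w hvw
    have hf : qd f * (h+1) ≤ j := by
      have : qd f ≤ qd (f.imp g) := le_max_left _ _
      calc qd f * (h+1) ≤ qd (f.imp g) * (h+1) := Nat.mul_le_mul_right _ this
      _ ≤ j := hj
    have hg : qd g * (h+1) ≤ j := by
      have : qd g ≤ qd (f.imp g) := le_max_right _ _
      calc qd g * (h+1) ≤ qd (f.imp g) * (h+1) := Nat.mul_le_mul_right _ this
      _ ≤ j := hj
    rw [BoundedFormula.realize_imp, BoundedFormula.realize_imp,
      ihf j hf P G v w hvw, ihg j hg P G v w hvw]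
  | all f ih =>
    intro j hj P G v w hvw
    have hqd : qd f * (h+1) + h ≤ j := by
      have : qd (f.all) = qd f + 1 := rfl
      rw [this] at hj
      have : (qd f + 1) * (h+1) = qd f * (h+1) + h + 1 := by ring
      omega
    have G' : LTree.Good thr T U (qd f * (h+1) + h) P := G.mono hqd
    rw [BoundedFormula.realize_all, BoundedFormula.realize_all]
    constructor
    · intro hall b
      obtain ⟨P', hPP', G'', a, haP'⟩ := G'.back b
      have hvw' : ∀ i, ((Fin.snoc v a : Fin _ → α) i, (Fin.snoc w b : Fin _ → β) i) ∈ P' := by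
        intro i
        refine Fin.lastCases ?_ ?_ i
        · simpa using haP'
        · intro i
          simpa using hPP' (hvw i)
      exact (ih (qd f * (h+1)) le_rfl P' G'' (Fin.snoc v a) (Fin.snoc w b) hvw').mp (hall a)
    · intro hall a
      obtain ⟨P', hPP', G'', b, hbP'⟩ := G'.forth a
      have hvw' : ∀ i, ((Fin.snoc v a : Fin _ → α) i, (Fin.snoc w b : Fin _ → β) i) ∈ P' := by
        intro i
        refine Fin.lastCases ?_ ?_ i
        · simpa using hbP'
        · intro i
          simpa using hPP' (hvw i)
      exact (ih (qd f * (h+1)) le_rfl P' G'' (Fin.snoc v a) (Fin.snoc w b) hvw').mpr (hall b)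

end Transfer

/-! ### From IsPredTree to LTree -/

lemma exists_ltree {M : Type} (s : LPred.Structure M) (hT : IsPredTree M s) {h : ℕ}
    (hH : PredHeightLe M s h) :
    ∃ T : LTree M h, ∀ x y, predOn s x y ↔ (y ≠ T.root ∧ T.par y = x) := by
  classical
  obtain ⟨⟨r, hr, hru⟩, huniq, hreach⟩ := hT
  set par : M → M := fun x => if hx : ∃ y, predOn s y x then (huniq x hx).choose else x with hpar
  have hparpred : ∀ (x : M), (∃ y, predOn s y x) → predOn s (par x) x := by
    intro x hx
    rw [hpar]
    simp only [hx, dif_pos]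
    exact (huniq x hx).choose_spec.1
  have hparuniq : ∀ x y, predOn s y x → par x = y := by
    intro x y hy
    have hx : ∃ y, predOn s y x := ⟨y, hy⟩
    rw [hpar]
    simp only [hx, dif_pos]
    exact ((huniq x hx).choose_spec.2 y hy).symm
  have hpar_r : par r = r := by rw [hpar]; simp only [hr, dif_neg, not_false_iff]
  have hbridge : ∀ x y, predOn s x y ↔ (y ≠ r ∧ par y = x) := by
    intro x y
    constructor
    · intro hxy
      refine ⟨fun hyr => hr ⟨x, hyr ▸ hxy⟩, hparuniq y x hxy⟩
    · rintro ⟨hne, rfl⟩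
      apply hparpred
      by_contra hno
      exact hne (hru y hno)
  have reach : ∀ x : M, ∃ k, par^[k] x = r := by
    intro x
    have hrt := hreach r x hr
    induction hrt with
    | refl => exact ⟨0, rfl⟩
    | tail hab hbc ih =>
      obtain ⟨k, hk⟩ := ih
      refine ⟨k + 1, ?_⟩
      rw [Function.iterate_succ_apply, hparuniq _ _ hbc, hk]
  set lev : M → ℕ := fun x => Nat.find (reach x) with hlev
  have hlev_spec : ∀ x, par^[lev x] x = r := fun x => Nat.find_spec (reach x)
  have hlev_min : ∀ x, ∀ j < lev x, par^[j] x ≠ r := fun x j hj => Nat.find_min (reach x) hj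
  have hlev_r : ∀ x, lev x = 0 ↔ x = r := by
    intro x
    constructor
    · intro h0
      have := hlev_spec x
      rwa [h0] at this
    · rintro rfl
      exact Nat.find_eq_zero (reach _) |>.mpr rfl
  have hlev_par : ∀ x, x ≠ r → lev x = lev (par x) + 1 := by
    intro x hx
    have hne0 : lev x ≠ 0 := fun h0 => hx ((hlev_r x).mp h0)
    obtain ⟨k, hk⟩ : ∃ k, lev x = k + 1 := ⟨lev x - 1, by omega⟩
    have h1 : par^[k] (par x) = r := by
      have := hlev_spec x
      rwa [hk, Function.iterate_succ_apply] at this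
    have h2 : lev (par x) ≤ k := Nat.find_min' (reach (par x)) h1
    have h3 : lev x ≤ lev (par x) + 1 := by
      apply Nat.find_min' (reach x)
      rw [Function.iterate_succ_apply]
      exact hlev_spec (par x)
    omega
  have hlev_le : ∀ x, lev x ≤ h := by
    intro x
    by_contra hgt
    push_neg at hgt
    apply hH (fun i : Fin (h+2) => par^[h + 1 - (i : ℕ)] x)
    intro i
    have hi : (i : ℕ) ≤ h := by omega
    have hcs : ((i.castSucc : Fin (h+2)) : ℕ) = (i : ℕ) := rfl
    have hsc : ((i.succ : Fin (h+2)) : ℕ) = (i : ℕ) + 1 := rfl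
    simp only [hcs, hsc]
    have e1 : h + 1 - ((i : ℕ) + 1) = h - (i : ℕ) := by omega
    have e2 : h + 1 - (i : ℕ) = (h - (i : ℕ)) + 1 := by omega
    rw [e1, e2, Function.iterate_succ_apply']
    apply (hbridge _ _).mpr
    refine ⟨?_, rfl⟩
    apply hlev_min x
    omega
  exact ⟨⟨r, par, lev, hpar_r, hlev_r, hlev_par, hlev_le⟩, hbridge⟩

/-! ### Pruning -/

namespace LTree

variable {h : ℕ} {α : Type}

noncomputable def cls (T : LTree α h) (thr : ℕ) (x : α) (j : ℕ) (t : TS thr j) : Set α :=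
  {c | c ∈ T.child x ∧ typ thr T j c = t}

lemma cls_disj (T : LTree α h) (thr : ℕ) (x : α) (j : ℕ) {t t' : TS thr j} (hne : t ≠ t') :
    Disjoint (cls T thr x j t) (cls T thr x j t') := by
  rw [Set.disjoint_left]
  rintro c ⟨-, h1⟩ ⟨-, h2⟩
  exact hne (h1 ▸ h2)

noncomputable def sel (T : LTree α h) (thr : ℕ) (x : α) (j : ℕ) (t : TS thr j) : Set α :=
  (exists_tcnt_subset thr (cls T thr x j t)).choose

lemma sel_sub (T : LTree α h) (thr : ℕ) (x : α) (j : ℕ) (t : TS thr j) :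
    sel T thr x j t ⊆ cls T thr x j t :=
  (exists_tcnt_subset thr (cls T thr x j t)).choose_spec.1

lemma sel_fin (T : LTree α h) (thr : ℕ) (x : α) (j : ℕ) (t : TS thr j) :
    (sel T thr x j t).Finite :=
  (exists_tcnt_subset thr (cls T thr x j t)).choose_spec.2.1

lemma sel_card (T : LTree α h) (thr : ℕ) (x : α) (j : ℕ) (t : TS thr j) :
    (sel T thr x j t).ncard = tcnt thr (cls T thr x j t) :=
  (exists_tcnt_subset thr (cls T thr x j t)).choose_spec.2.2

noncomputable def chosen (T : LTree α h) (thr : ℕ) (x : α) (j : ℕ) : Set α :=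
  ⋃ t ∈ (Finset.univ : Finset (TS thr j)), sel T thr x j t

lemma chosen_fin (T : LTree α h) (thr : ℕ) (x : α) (j : ℕ) : (chosen T thr x j).Finite :=
  Set.Finite.biUnion (Finset.univ : Finset (TS thr j)).finite_toSet
    (fun t _ => sel_fin T thr x j t)

lemma chosen_sub (T : LTree α h) (thr : ℕ) (x : α) (j : ℕ) :
    chosen T thr x j ⊆ T.child x := by
  intro y hy
  simp only [chosen, Set.mem_iUnion] at hy
  obtain ⟨t, -, ht⟩ := hy
  exact (sel_sub T thr x j t ht).1

noncomputable def Kset (T : LTree α h) (thr D : ℕ) : ℕ → Set α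
  | 0 => {T.root}
  | ℓ+1 => ⋃ x ∈ Kset T thr D ℓ, chosen T thr x (D - ℓ - 1)

lemma Kset_fin (T : LTree α h) (thr D : ℕ) : ∀ ℓ, (Kset T thr D ℓ).Finite
  | 0 => Set.finite_singleton _
  | ℓ+1 => Set.Finite.biUnion (Kset_fin T thr D ℓ) (fun x _ => chosen_fin T thr x _)

lemma Kset_lev (T : LTree α h) (thr D : ℕ) : ∀ ℓ x, x ∈ Kset T thr D ℓ → T.lev x = ℓ
  | 0, x, hx => by
    simp only [Kset, Set.mem_singleton_iff] at hx
    subst hx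
    exact (T.lev_eq_zero T.root).mpr rfl
  | ℓ+1, x, hx => by
    simp only [Kset, Set.mem_iUnion] at hx
    obtain ⟨y, hy, hxy⟩ := hx
    have := chosen_sub T thr y _ hxy
    rw [lev_child this, Kset_lev T thr D ℓ y hy]

/-- the K-children of a kept node are exactly the chosen ones -/
lemma kept_child (T : LTree α h) (thr D : ℕ) {ℓ : ℕ} {x : α} (hx : x ∈ Kset T thr D ℓ) (y : α) :
    (y ∈ T.child x ∧ y ∈ Kset T thr D (T.lev y)) ↔ y ∈ chosen T thr x (D - ℓ - 1) := by
  constructor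
  · rintro ⟨hchild, hmem⟩
    have hlev : T.lev y = ℓ + 1 := by rw [lev_child hchild, Kset_lev T thr D ℓ x hx]
    rw [hlev] at hmem
    simp only [Kset, Set.mem_iUnion] at hmem
    obtain ⟨z, hz, hyz⟩ := hmem
    have : T.par y = z := (chosen_sub T thr z _ hyz).1
    rw [hchild.1] at this
    subst this
    exact hyz
  · intro hy
    have hchild := chosen_sub T thr x _ hy
    refine ⟨hchild, ?_⟩
    have hlev : T.lev y = ℓ + 1 := by rw [lev_child hchild, Kset_lev T thr D ℓ x hx]
    rw [hlev]
    simp only [Kset, Set.mem_iUnion]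
    exact ⟨x, hx, hy⟩

/-- The pruned tree carrier. -/
def PT (T : LTree α h) (thr D : ℕ) : Type := {x : α // x ∈ Kset T thr D (T.lev x)}

instance (T : LTree α h) (thr D : ℕ) : Finite (PT T thr D) := by
  have hK : {x : α | x ∈ Kset T thr D (T.lev x)}.Finite := by
    apply Set.Finite.subset (Set.Finite.biUnion (Finset.range (h+1)).finite_toSet
      (fun ℓ _ => Kset_fin T thr D ℓ))
    intro x hx
    simp only [Set.mem_iUnion]
    exact ⟨T.lev x, by simp [Nat.lt_succ_iff, T.lev_le x], hx⟩
  exact hK.to_subtype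


variable (T : LTree α h) (thr D : ℕ)

noncomputable def Proot : PT T thr D :=
  ⟨T.root, by rw [(T.lev_eq_zero T.root).mpr rfl]; simp [Kset]⟩

lemma par_mem_Kset {b : PT T thr D} (hb : b.val ≠ T.root) :
    T.par b.val ∈ Kset T thr D (T.lev (T.par b.val)) := by
  have hK := b.property
  have hlev := T.lev_par b.val hb
  rw [hlev] at hK
  simp only [Kset, Set.mem_iUnion] at hK
  obtain ⟨z, hz, hbz⟩ := hK
  have hzz : T.par b.val = z := (chosen_sub T thr z _ hbz).1
  subst hzz
  exact hz

noncomputable def Ppar : PT T thr D → PT T thr D := fun b =>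
  if hb : b.val = T.root then Proot T thr D
  else ⟨T.par b.val, par_mem_Kset T thr D hb⟩

noncomputable def PTree : LTree (PT T thr D) h where
  root := Proot T thr D
  par := Ppar T thr D
  lev := fun b => T.lev b.val
  par_root := by exact dif_pos rfl
  lev_eq_zero := fun b =>
    ⟨fun hv => Subtype.ext ((T.lev_eq_zero b.val).mp hv),
     fun hb => (T.lev_eq_zero b.val).mpr (congrArg Subtype.val hb)⟩
  lev_par := by
    intro b hb
    have hvne : b.val ≠ T.root := fun hv => hb (Subtype.ext hv)
    rw [show Ppar T thr D b = ⟨T.par b.val, par_mem_Kset T thr D hvne⟩ from dif_neg hvne]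
    exact T.lev_par b.val hvne
  lev_le := fun b => T.lev_le b.val

lemma typ_agree : ∀ (j : ℕ) (b : PT T thr D), j + T.lev b.val ≤ D →
    typ thr (PTree T thr D) j b = typ thr T j b.val := by
  intro j
  induction j with
  | zero => intro b _; rfl
  | succ j ih =>
    intro b hbud
    refine Prod.ext ?_ ?_
    · exact ih b (by omega)
    · funext t
      refine Fin.ext ?_
      rw [show (((typ thr (PTree T thr D) (j+1) b).2 t : ℕ)) =
          tcnt thr {c | c ∈ (PTree T thr D).child b ∧ typ thr (PTree T thr D) j c = t}
          from rfl,
        show (((typ thr T (j+1) b.val).2 t : ℕ)) = tcnt thr (cls T thr b.val j t) from rfl]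
      set ℓ := T.lev b.val with hℓ
      set jD := D - ℓ - 1 with hjD
      have hj : j ≤ jD := by omega
      have hbK : b.val ∈ Kset T thr D ℓ := b.property
      -- step 1: transport to α via Subtype.val
      have himg : Subtype.val '' {c | c ∈ (PTree T thr D).child b ∧ typ thr (PTree T thr D) j c = t}
          = {y | y ∈ chosen T thr b.val jD ∧ typ thr T j y = t} := by
        ext y
        constructor
        · rintro ⟨c, ⟨⟨hpar, hroot⟩, htyp⟩, rfl⟩
          have hvne : c.val ≠ T.root := fun hv => hroot (Subtype.ext hv)
          have hparv : T.par c.val = b.val := by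
            have h0 : Ppar T thr D c = b := hpar
            rw [show Ppar T thr D c = ⟨T.par c.val, par_mem_Kset T thr D hvne⟩ from dif_neg hvne] at h0
            exact congrArg Subtype.val h0
          have hchild : c.val ∈ T.child b.val := ⟨hparv, hvne⟩
          have hcc := (kept_child T thr D hbK c.val).mp ⟨hchild, c.property⟩
          refine ⟨hcc, ?_⟩
          have hlevc : T.lev c.val = ℓ + 1 := by rw [lev_child hchild]
          rw [← ih c (by omega)]
          exact htyp
        · rintro ⟨hyc, hyt⟩
          have hchild : y ∈ T.child b.val := chosen_sub _ _ _ _ hyc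
          have hyK : y ∈ Kset T thr D (T.lev y) := ((kept_child T thr D hbK y).mpr hyc).2
          refine ⟨⟨y, hyK⟩, ⟨⟨?_, ?_⟩, ?_⟩, rfl⟩
          · show Ppar T thr D ⟨y, hyK⟩ = b
            rw [show Ppar T thr D ⟨y, hyK⟩ = ⟨T.par y, par_mem_Kset T thr D (b := ⟨y, hyK⟩) hchild.2⟩ from dif_neg (show y ≠ T.root from hchild.2)]
            exact Subtype.ext hchild.1
          · intro hr
            exact hchild.2 (congrArg Subtype.val hr)
          · have hlevy : T.lev y = ℓ + 1 := lev_child hchild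
            rw [show typ thr (PTree T thr D) j ⟨y, hyK⟩ = typ thr T j y from ih ⟨y, hyK⟩ (by show j + T.lev y ≤ D; omega)]
            exact hyt
      have h1 : tcnt thr {c | c ∈ (PTree T thr D).child b ∧ typ thr (PTree T thr D) j c = t}
          = tcnt thr {y | y ∈ chosen T thr b.val jD ∧ typ thr T j y = t} :=
        tcnt_congr_of_bij thr Subtype.val Subtype.val_injective.injOn himg
      rw [h1]
      -- step 2: the class decomposition
      set S : Finset (TS thr jD) := Finset.univ.filter
        (fun t' => ∃ y, y ∈ cls T thr b.val jD t' ∧ typ thr T j y = t) with hS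
      have hBB : {y | y ∈ chosen T thr b.val jD ∧ typ thr T j y = t}
          = ⋃ t' ∈ S, sel T thr b.val jD t' := by
        ext y
        simp only [Set.mem_setOf_eq, Set.mem_iUnion, chosen, hS, Finset.mem_filter,
          Finset.mem_univ, true_and]
        constructor
        · rintro ⟨⟨t', -, hsel⟩, hyt⟩
          exact ⟨t', ⟨y, sel_sub T thr b.val jD t' hsel, hyt⟩, hsel⟩
        · rintro ⟨t', ⟨z, hz, hzt⟩, hysel⟩
          have hycls := sel_sub T thr b.val jD t' hysel
          refine ⟨⟨t', ⟨trivial, hysel⟩⟩, ?_⟩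
          have : typ thr T j y = typ thr T j z :=
            typ_le hj y z (hycls.2.trans hz.2.symm)
          rw [this]
          exact hzt
      have hCC : cls T thr b.val j t = ⋃ t' ∈ S, cls T thr b.val jD t' := by
        ext y
        simp only [Set.mem_iUnion, hS, Finset.mem_filter, Finset.mem_univ, true_and]
        constructor
        · rintro ⟨hchild, hyt⟩
          exact ⟨typ thr T jD y, ⟨y, ⟨hchild, rfl⟩, hyt⟩, ⟨hchild, rfl⟩⟩
        · rintro ⟨t', ⟨z, hz, hzt⟩, hycls⟩
          refine ⟨hycls.1, ?_⟩
          have : typ thr T j y = typ thr T j z :=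
            typ_le hj y z (hycls.2.trans hz.2.symm)
          rw [this]
          exact hzt
      rw [hBB, hCC]
      rw [tcnt_biUnion thr S (fun t' => sel T thr b.val jD t')
        (fun i _ j' _ hij => Set.disjoint_of_subset (sel_sub _ _ _ _ _) (sel_sub _ _ _ _ _)
          (cls_disj T thr b.val jD hij)),
        tcnt_biUnion thr S (fun t' => cls T thr b.val jD t')
        (fun i _ j' _ hij => cls_disj T thr b.val jD hij)]
      congr 1
      refine Finset.sum_congr rfl (fun t' _ => ?_)
      have hsel' : tcnt thr (sel T thr b.val jD t') = min thr (sel T thr b.val jD t').ncard := by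
        simp [tcnt, sel_fin]
      rw [hsel', sel_card]
      exact min_eq_right (tcnt_le _ _)

end LTree

/-! ### The pruned structure and final assembly -/

namespace LTree

noncomputable def sN {h : ℕ} {α : Type} (T : LTree α h) (thr D : ℕ) :
    LPred.Structure (PT T thr D) where
  funMap := fun {n} f _ => (f : Empty).elim
  RelMap := fun {n} R v =>
    match n, R with
    | 2, _ => v 1 ≠ Proot T thr D ∧ Ppar T thr D (v 1) = v 0
    | 0, r => (r : Empty).elim
    | 1, r => (r : Empty).elim
    | (_+3), r => (r : Empty).elim

lemma sN_bridge {h : ℕ} {α : Type} (T : LTree α h) (thr D : ℕ) :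
    ∀ x y : PT T thr D, predOn (sN T thr D) x y ↔
      (y ≠ (PTree T thr D).root ∧ (PTree T thr D).par y = x) := fun _ _ => Iff.rfl

end LTree

lemma isPredTree_of_ltree {h : ℕ} {β : Type} (s : LPred.Structure β) (U : LTree β h)
    (hbr : ∀ x y, predOn s x y ↔ (y ≠ U.root ∧ U.par y = x)) : IsPredTree β s := by
  have hrootpred : ¬∃ y, predOn s y U.root := by
    rintro ⟨y, hy⟩
    exact ((hbr y U.root).mp hy).1 rfl
  have hnr : ∀ x, (¬∃ y, predOn s y x) → x = U.root := by
    intro x hx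
    by_contra hne
    exact hx ⟨U.par x, (hbr (U.par x) x).mpr ⟨hne, rfl⟩⟩
  refine ⟨⟨U.root, hrootpred, hnr⟩, ?_, ?_⟩
  · rintro x ⟨y, hy⟩
    refine ⟨y, hy, fun z hz => ?_⟩
    rw [← ((hbr z x).mp hz).2, ← ((hbr y x).mp hy).2]
  · intro r x hr
    have hrr : r = U.root := hnr r hr
    subst hrr
    have key : ∀ n x, U.lev x ≤ n → Relation.ReflTransGen (predOn s) U.root x := by
      intro n
      induction n with
      | zero =>
        intro x hx
        rw [(U.lev_eq_zero x).mp (by omega)]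
      | succ n ih =>
        intro x hx
        by_cases hxr : x = U.root
        · rw [hxr]
        · have hlev := U.lev_par x hxr
          exact Relation.ReflTransGen.tail (ih (U.par x) (by omega))
            ((hbr (U.par x) x).mpr ⟨hxr, rfl⟩)
    exact key (U.lev x) x le_rfl


/-- finite-height trees in the language `{Pred}` are pseudofinite: every sentence
true in some tree of finite height is true in some finite tree. -/
theorem finite_height_trees_pseudofinite_pred (φ : LPred.Sentence)
    (hφ : ∃ (M : Type) (s : LPred.Structure M), IsPredTree M s ∧
      (∃ h : ℕ, PredHeightLe M s h) ∧ @Sentence.Realize LPred M s φ) :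
    ∃ (N : Type) (s : LPred.Structure N), IsPredTree N s ∧ Finite N ∧
      @Sentence.Realize LPred N s φ := by
  obtain ⟨M, s, hT, ⟨h, hH⟩, hreal⟩ := hφ
  obtain ⟨T, hbr⟩ := exists_ltree s hT hH
  set j0 := qd (φ : LPred.BoundedFormula Empty 0) * (h+1) with hj0
  set thr := j0 + 1 with hthr
  set D := j0 with hD
  set U := LTree.PTree T thr D with hU
  refine ⟨LTree.PT T thr D, LTree.sN T thr D,
    isPredTree_of_ltree _ U (LTree.sN_bridge T thr D), inferInstance, ?_⟩
  have G0 : LTree.Good thr T U j0 {(T.root, U.root)} := by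
    constructor
    · exact rfl
    · exact Set.finite_singleton _
    · rw [Set.ncard_singleton]
      omega
    · rintro p hp
      rw [Set.mem_singleton_iff] at hp
      subst hp
      show U.lev U.root = T.lev T.root
      rw [(U.lev_eq_zero U.root).mpr rfl, (T.lev_eq_zero T.root).mpr rfl]
    · rintro p hp
      rw [Set.mem_singleton_iff] at hp
      subst hp
      show LTree.typ thr T j0 T.root = LTree.typ thr U j0 U.root
      refine (LTree.typ_agree T thr D j0 U.root ?_).symm
      show j0 + T.lev T.root ≤ D
      rw [(T.lev_eq_zero T.root).mpr rfl]
      omega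
    · rintro p hp hne
      rw [Set.mem_singleton_iff] at hp
      subst hp
      exact absurd rfl hne
    · rintro p hp q hq _
      rw [Set.mem_singleton_iff] at hp hq
      rw [hp, hq]
    · rintro p hp q hq _
      rw [Set.mem_singleton_iff] at hp hq
      rw [hp, hq]
  have htrans := transfer T U s (LTree.sN T thr D) hbr (LTree.sN_bridge T thr D) φ j0 le_rfl
    {(T.root, U.root)} G0 (fun i => i.elim0) (fun i => i.elim0) (fun i => i.elim0)
  have eM : @Sentence.Realize LPred M s φ ↔
      @BoundedFormula.Realize LPred M s Empty 0 φ (fun e => e.elim) (fun i => i.elim0) := by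
    rw [show ((fun e => e.elim : Empty → M)) = (default : Empty → M) from
        funext (fun e => e.elim),
      show ((fun i => i.elim0 : Fin 0 → M)) = (default : Fin 0 → M) from
        funext (fun i => i.elim0)]
    exact Iff.rfl
  have eN : @Sentence.Realize LPred (LTree.PT T thr D) (LTree.sN T thr D) φ ↔
      @BoundedFormula.Realize LPred (LTree.PT T thr D) (LTree.sN T thr D) Empty 0 φ
        (fun e => e.elim) (fun i => i.elim0) := by
    rw [show ((fun e => e.elim : Empty → LTree.PT T thr D)) = default from
        funext (fun e => e.elim),
      show ((fun i => i.elim0 : Fin 0 → LTree.PT T thr D)) = default from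
        funext (fun i => i.elim0)]
    exact Iff.rfl
  rw [eN, ← htrans, ← eM]
  exact hreal
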